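/- arXiv:2512.17571 — 5 statements merged into one kernel-verified Lean document; each statement's English description precedes it below -/
import Mathlib

section
/- Let p, n ≥ 1, let B, D ∈ ℂ^{p×p} and L ∈ ℂ^{n×n}. For every eigenvalue μ of J = Iₙ ⊗ B − L ⊗ D there exist an eigenvalue λ of L and a nonzero vector v ∈ ℂ^{p} such that (B − μ·I_p) v = λ·D v; i.e., every eigenvalue of J solves the generalized eigenvalue problem (B − μI)v = λDv for some Laplacian eigenvalue λ. -/
set_option maxHeartbeats 1000000

open Matrix
open scoped Kronecker

/-- `μ` is an eigenvalue of the square complex matrix `M`. -/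
def Matrix.IsEigenvalue {N : Type*} [Fintype N] (M : Matrix N N ℂ) (μ : ℂ) : Prop :=
  ∃ v : N → ℂ, v ≠ 0 ∧ M.mulVec v = μ • v

/-- Every eigenvalue `μ` of `J = Iₙ ⊗ B − L ⊗ D` solves the generalised eigenvalue problem
`(B − μI)v = λ·Dv` for some eigenvalue `λ` of `L` and some nonzero `v`. -/
theorem eigenvalue_kronecker_generalized (p n : ℕ) (hp : 1 ≤ p) (hn : 1 ≤ n)
    (B D : Matrix (Fin p) (Fin p) ℂ) (L : Matrix (Fin n) (Fin n) ℂ) (μ : ℂ)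
    (hμ : ((1 : Matrix (Fin n) (Fin n) ℂ) ⊗ₖ B - L ⊗ₖ D).IsEigenvalue μ) :
    ∃ lam : ℂ, L.IsEigenvalue lam ∧
      ∃ v : Fin p → ℂ, v ≠ 0 ∧ (B - μ • (1 : Matrix (Fin p) (Fin p) ℂ)).mulVec v
        = lam • D.mulVec v := by
  obtain ⟨w, hw0, hw⟩ := hμ
  -- entrywise form of the eigen-equation
  have key : ∀ (j : Fin n) (i : Fin p),
      (∑ l, B i l * w (j, l)) - (∑ k, ∑ l, L j k * (D i l * w (k, l)))
        = μ * w (j, i) := by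
    intro j i
    have h := congrFun hw (j, i)
    simpa [Matrix.mulVec, dotProduct, Matrix.sub_apply, Fintype.sum_prod_type,
      Matrix.one_apply, sub_mul, ite_mul, zero_mul, one_mul, Finset.sum_sub_distrib,
      Finset.sum_ite_eq, mul_assoc] using h
  -- the matrix X whose columns are the blocks of w
  set X : Matrix (Fin p) (Fin n) ℂ := Matrix.of fun i j => w (j, i) with hXdef
  have hX : (B - μ • (1 : Matrix (Fin p) (Fin p) ℂ)) * X = D * X * Lᵀ := by
    ext i j
    have h := key j i
    simp only [Matrix.mul_apply, Matrix.sub_apply, Matrix.smul_apply, Matrix.one_apply,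
      Matrix.transpose_apply, hXdef, Matrix.of_apply, sub_mul, ite_mul, one_mul, zero_mul,
      mul_ite, mul_one, mul_zero, smul_eq_mul, Finset.sum_sub_distrib, Finset.sum_ite_eq,
      Finset.sum_ite_eq', Finset.mem_univ, if_true]
    have hr : ∑ k, (∑ l, D i l * w (k, l)) * L j k
        = ∑ k, ∑ l, L j k * (D i l * w (k, l)) := by
      refine Finset.sum_congr rfl fun k _ => ?_
      rw [Finset.sum_mul]
      exact Finset.sum_congr rfl fun l _ => by ring
    rw [hr]
    linear_combination h
  -- linear maps
  set g : (Fin n → ℂ) →ₗ[ℂ] (Fin p → ℂ) := X.mulVecLin with hgdef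
  set f : Module.End ℂ (Fin n → ℂ) := Lᵀ.mulVecLin with hfdef
  have hcomm : ∀ u : Fin n → ℂ,
      (B - μ • (1 : Matrix (Fin p) (Fin p) ℂ)).mulVecLin (g u)
        = D.mulVecLin (g (f u)) := by
    intro u
    have h2 := congrArg Matrix.mulVecLin hX
    rw [Matrix.mulVecLin_mul, Matrix.mulVecLin_mul, Matrix.mulVecLin_mul] at h2
    exact LinearMap.congr_fun h2 u
  -- the invariant subspace
  set K : Submodule ℂ (Fin n → ℂ) :=
    ⨅ k : ℕ, LinearMap.ker (g ∘ₗ (f ^ k : Module.End ℂ (Fin n → ℂ))) with hKdef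
  have hKmem : ∀ u : Fin n → ℂ, u ∈ K ↔ ∀ k : ℕ, g ((f ^ k) u) = 0 := by
    intro u
    simp [hKdef, Submodule.mem_iInf, LinearMap.mem_ker]
  have hKinv : ∀ u ∈ K, f u ∈ K := by
    intro u hu
    rw [hKmem] at hu ⊢
    intro k
    have := hu (k + 1)
    rwa [pow_succ, Module.End.mul_apply] at this
  have hKg : ∀ u ∈ K, g u = 0 := by
    intro u hu
    simpa using (hKmem u).1 hu 0
  have hKle : K ≤ K.comap f := fun u hu => hKinv u hu
  -- K is proper
  have hXne : X ≠ 0 := by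
    intro hX0
    apply hw0
    funext ji
    have := congrFun (congrFun hX0 ji.2) ji.1
    simpa [hXdef] using this
  have hKne : K ≠ ⊤ := by
    intro hKtop
    apply hXne
    ext i j
    have hj : (Pi.single j 1 : Fin n → ℂ) ∈ K := hKtop ▸ Submodule.mem_top
    have := congrFun (hKg _ hj) i
    simpa [hgdef, Matrix.mulVecLin_apply, Matrix.mulVec_single] using this
  -- the induced map on the quotient and its eigenvalue
  have : Nontrivial ((Fin n → ℂ) ⧸ K) :=
    Submodule.Quotient.nontrivial_iff.2 hKne
  set fbar : Module.End ℂ ((Fin n → ℂ) ⧸ K) := K.mapQ K f hKle with hfbardef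
  obtain ⟨lam, hlam⟩ := Module.End.exists_eigenvalue fbar
  obtain ⟨ubar, hubar⟩ := hlam.exists_hasEigenvector
  obtain ⟨u, rfl⟩ := Submodule.Quotient.mk_surjective K ubar
  have hubar0 : Submodule.Quotient.mk (p := K) u ≠ 0 := hubar.right
  have hfu : f u - lam • u ∈ K := by
    have h1 : fbar (Submodule.Quotient.mk u) = lam • Submodule.Quotient.mk u :=
      hubar.apply_eq_smul
    have h3 : fbar (Submodule.Quotient.mk u)
        = Submodule.Quotient.mk (f u) := by
      simp [hfbardef, Submodule.mapQ_apply]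
    have h2 : (Submodule.Quotient.mk (f u) : (Fin n → ℂ) ⧸ K)
        = Submodule.Quotient.mk (lam • u) := by
      rw [← h3, h1, Submodule.Quotient.mk_smul]
    exact (Submodule.Quotient.eq K).1 h2
  -- powers of f preserve K
  have hKpow : ∀ (k : ℕ) (x : Fin n → ℂ), x ∈ K → (f ^ k) x ∈ K := by
    intro k
    induction k with
    | zero => intro x hx; simpa only [pow_zero, Module.End.one_apply] using hx
    | succ k ih =>
      intro x hx
      rw [pow_succ, Module.End.mul_apply]
      exact ih (f x) (hKinv x hx)
  -- iterates
  have hiter : ∀ k : ℕ, g ((f ^ k) u) = lam ^ k • g u := by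
    intro k
    induction k with
    | zero => simp only [pow_zero, Module.End.one_apply, one_smul]
    | succ k ih =>
      have hsplit : f u = lam • u + (f u - lam • u) := by abel
      rw [pow_succ, Module.End.mul_apply, hsplit, map_add, map_add,
        hKg _ (hKpow k _ hfu), add_zero, _root_.map_smul, _root_.map_smul, ih,
        smul_smul, ← pow_succ']
  -- the candidate vector
  set v : Fin p → ℂ := g u with hvdef
  have hv0 : v ≠ 0 := by
    intro hv
    apply hubar0
    rw [Submodule.Quotient.mk_eq_zero]
    rw [hKmem]
    intro k
    rw [hiter k, hv, smul_zero]
  -- lam is an eigenvalue of L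
  have hdet : (L - lam • (1 : Matrix (Fin n) (Fin n) ℂ)).det = 0 := by
    by_contra hd
    have hunit : IsUnit (L - lam • (1 : Matrix (Fin n) (Fin n) ℂ)) :=
      (Matrix.isUnit_iff_isUnit_det _).2 (isUnit_iff_ne_zero.2 hd)
    -- then f - lam is surjective, hence the induced quotient map is injective
    have hsurj : Function.Surjective ((Lᵀ - lam • (1 : Matrix (Fin n) (Fin n) ℂ)).mulVecLin) := by
      obtain ⟨M, hM⟩ := hunit.exists_left_inv
      intro y
      refine ⟨Mᵀ.mulVec y, ?_⟩
      have : Lᵀ - lam • (1 : Matrix (Fin n) (Fin n) ℂ) = (L - lam • 1)ᵀ := by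
        simp [Matrix.transpose_sub, Matrix.transpose_smul]
      rw [Matrix.mulVecLin_apply, this, Matrix.mulVec_mulVec, ← Matrix.transpose_mul, hM,
        Matrix.transpose_one, Matrix.one_mulVec]
    have hsub : ∀ x : Fin n → ℂ,
        (Lᵀ - lam • (1 : Matrix (Fin n) (Fin n) ℂ)).mulVecLin x = f x - lam • x := by
      intro x
      simp [hfdef, Matrix.mulVecLin_apply, Matrix.sub_mulVec, Matrix.smul_mulVec,
        Matrix.one_mulVec, Matrix.mulVec_transpose]
    set E : Module.End ℂ ((Fin n → ℂ) ⧸ K) :=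
      fbar - lam • (1 : Module.End ℂ ((Fin n → ℂ) ⧸ K)) with hEdef
    have hsurjq : Function.Surjective E := by
      intro q
      obtain ⟨y, rfl⟩ := Submodule.Quotient.mk_surjective K q
      obtain ⟨x, hx⟩ := hsurj y
      rw [hsub x] at hx
      refine ⟨Submodule.Quotient.mk x, ?_⟩
      have hfx : fbar (Submodule.Quotient.mk x) = Submodule.Quotient.mk (f x) := by
        simp [hfbardef, Submodule.mapQ_apply]
      rw [hEdef, LinearMap.sub_apply, hfx, LinearMap.smul_apply, Module.End.one_apply,
        ← Submodule.Quotient.mk_smul, ← Submodule.Quotient.mk_sub, hx]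
    have hinj : Function.Injective E :=
      LinearMap.injective_iff_surjective.2 hsurjq
    have hE0 : E (Submodule.Quotient.mk u) = 0 := by
      rw [hEdef, LinearMap.sub_apply, hubar.apply_eq_smul, LinearMap.smul_apply,
        Module.End.one_apply, sub_self]
    exact hubar0 (hinj (by rw [hE0, map_zero]))
  obtain ⟨vL, hvL0, hvL⟩ := (Matrix.exists_mulVec_eq_zero_iff.2 hdet)
  refine ⟨lam, ⟨vL, hvL0, ?_⟩, v, hv0, ?_⟩
  · rw [Matrix.sub_mulVec, Matrix.smul_mulVec, Matrix.one_mulVec, sub_eq_zero] at hvL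
    exact hvL
  · -- the generalized eigenvalue equation
    have h1 : g (f u) = lam • v := by
      have := hiter 1
      simpa [pow_one] using this
    have h2 := hcomm u
    rw [h1, _root_.map_smul] at h2
    simpa [Matrix.mulVecLin_apply, hvdef, Matrix.sub_mulVec, Matrix.smul_mulVec] using h2
end

section
/- Let p, n ≥ 1, B ∈ ℂ^{p×p}, v, w ∈ ℂ^{p} and D = v·wᵀ (a rank-one matrix). Assume the Kalman rank conditions rank([v, Bv, …, B^{p−1}v]) = p and rank([w, Bᵀw, …, (Bᵀ)^{p−1}w]) = p. Let L ∈ ℂ^{n×n} be a matrix having 0 as an eigenvalue (as holds for the in-degree Laplacian of any digraph), and set J = Iₙ ⊗ B − L ⊗ D. Then for every μ ∈ σ(J) \ σ(B) the scalar wᵀ(B − μ·I_p)^{−1}v is nonzero, and σ(L) = {0} ∪ { 1 / (wᵀ(B − μ·I_p)^{−1}v) : μ ∈ σ(J) \ σ(B) }. -/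
open Matrix
open scoped Kronecker

namespace RankOneAux

variable {p n : ℕ}

lemma eig_iff_det (M : Matrix (Fin p) (Fin p) ℂ) (μ : ℂ) :
    M.IsEigenvalue μ ↔ (M - μ • (1 : Matrix (Fin p) (Fin p) ℂ)).det = 0 := by
  rw [← Matrix.exists_mulVec_eq_zero_iff]
  constructor
  · rintro ⟨x, hx, hMx⟩
    exact ⟨x, hx, by simp [Matrix.sub_mulVec, Matrix.smul_mulVec, hMx]⟩
  · rintro ⟨x, hx, hMx⟩
    refine ⟨x, hx, ?_⟩
    rw [Matrix.sub_mulVec, Matrix.smul_mulVec, Matrix.one_mulVec, sub_eq_zero] at hMx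
    exact hMx

lemma isUnit_of_rank_eq (A : Matrix (Fin p) (Fin p) ℂ) (h : A.rank = p) : IsUnit A := by
  rw [← Matrix.mulVec_injective_iff_isUnit]
  have hrange : LinearMap.range A.mulVecLin = ⊤ := by
    apply Submodule.eq_top_of_finrank_eq
    rw [← Matrix.rank, h]
    simp [Module.finrank_pi]
  have hsurj : Function.Surjective A.mulVecLin := LinearMap.range_eq_top.mp hrange
  exact (LinearMap.injective_iff_surjective).mpr hsurj

/-- Observability: if `B y = μ y` and `w ⬝ y = 0` then `y = 0`. -/
lemma obs_lemma (B : Matrix (Fin p) (Fin p) ℂ) (w : Fin p → ℂ)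
    (hobsv : (Matrix.of fun i j : Fin p => ((Bᵀ ^ (j : ℕ)).mulVec w) i).rank = p)
    (y : Fin p → ℂ) (μ : ℂ) (hy : B.mulVec y = μ • y) (hwy : w ⬝ᵥ y = 0) : y = 0 := by
  set O : Matrix (Fin p) (Fin p) ℂ := Matrix.of fun i j : Fin p => ((Bᵀ ^ (j : ℕ)).mulVec w) i
  have hpow : ∀ k : ℕ, (B ^ k).mulVec y = (μ ^ k) • y := by
    intro k
    induction k with
    | zero => simp
    | succ k ih =>
      rw [pow_succ, ← Matrix.mulVec_mulVec, hy, Matrix.mulVec_smul, ih, smul_smul,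
        pow_succ, mul_comm]
  have hO : IsUnit Oᵀ := (Matrix.isUnit_transpose O).mpr (isUnit_of_rank_eq O hobsv)
  have hmul : Oᵀ.mulVec y = 0 := by
    funext j
    have : Oᵀ.mulVec y j = ((Bᵀ ^ (j : ℕ)).mulVec w) ⬝ᵥ y := by
      simp [Matrix.mulVec, dotProduct, O]
    rw [this]
    have h1 : (Bᵀ ^ (j : ℕ)).mulVec w = w ᵥ* (B ^ (j : ℕ)) := by
      rw [← Matrix.transpose_pow, Matrix.mulVec_transpose]
    rw [h1, ← Matrix.dotProduct_mulVec, hpow]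
    simp [hwy]
  have hinj := Matrix.mulVec_injective_iff_isUnit.mpr hO
  apply hinj
  rw [hmul, Matrix.mulVec_zero]

lemma exists_eig (hp : 1 ≤ p) (A : Matrix (Fin p) (Fin p) ℂ) :
    ∃ μ : ℂ, ∃ y : Fin p → ℂ, y ≠ 0 ∧ A.mulVec y = μ • y := by
  haveI : Nonempty (Fin p) := Fin.pos_iff_nonempty.mp hp
  obtain ⟨μ, hμ⟩ := Module.End.exists_eigenvalue (Matrix.mulVecLin A)
  obtain ⟨y, hy⟩ := hμ.exists_hasEigenvector
  exact ⟨μ, y, hy.right, hy.apply_eq_smul⟩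

lemma kron_mulVec (A : Matrix (Fin n) (Fin n) ℂ) (M : Matrix (Fin p) (Fin p) ℂ)
    (z : Fin n × Fin p → ℂ) (i : Fin n) (k : Fin p) :
    ((A ⊗ₖ M).mulVec z) (i, k) = ∑ j, A i j * (M.mulVec fun l => z (j, l)) k := by
  simp [Matrix.mulVec, dotProduct, Fintype.sum_prod_type, Finset.mul_sum, mul_assoc]

lemma sum_one_mul (f : Fin n → ℂ) (i : Fin n) :
    ∑ j, (1 : Matrix (Fin n) (Fin n) ℂ) i j * f j = f i := by
  simp [Matrix.one_apply]

lemma vecMulVec_mulVec' (v w y : Fin p → ℂ) :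
    (Matrix.vecMulVec v w).mulVec y = (w ⬝ᵥ y) • v := by
  funext k
  simp only [Matrix.mulVec, dotProduct, Matrix.vecMulVec_apply, Pi.smul_apply,
    smul_eq_mul, Finset.sum_mul]
  exact Finset.sum_congr rfl fun l _ => by ring

lemma vecMul_vecMulVec' (v w ξ : Fin p → ℂ) :
    ξ ᵥ* (Matrix.vecMulVec v w) = (ξ ⬝ᵥ v) • w := by
  funext k
  simp only [Matrix.vecMul, dotProduct, Matrix.vecMulVec_apply, Pi.smul_apply,
    smul_eq_mul, Finset.sum_mul]
  exact Finset.sum_congr rfl fun l _ => by ring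

lemma inv_mulVec {M : Matrix (Fin p) (Fin p) ℂ} (hM : IsUnit M) {y s : Fin p → ℂ}
    (h : M.mulVec y = s) : y = M⁻¹.mulVec s := by
  rw [← h, Matrix.mulVec_mulVec,
    Matrix.nonsing_inv_mul _ ((Matrix.isUnit_iff_isUnit_det _).mp hM), Matrix.one_mulVec]

end RankOneAux

/-- Rank-one coupling `D = v·wᵀ` with Kalman rank conditions: the Laplacian spectrum is
recovered from the spectrum of `J = Iₙ ⊗ B − L ⊗ D` via
`σ(L) = {0} ∪ {1 / (wᵀ(B − μI)⁻¹v) : μ ∈ σ(J) \ σ(B)}`. -/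
theorem laplacian_spectrum_from_jacobian_rank_one (p n : ℕ) (hp : 1 ≤ p) (hn : 1 ≤ n)
    (B : Matrix (Fin p) (Fin p) ℂ) (v w : Fin p → ℂ)
    (hctrb : (Matrix.of fun i j : Fin p => ((B ^ (j : ℕ)).mulVec v) i).rank = p)
    (hobsv : (Matrix.of fun i j : Fin p => ((Bᵀ ^ (j : ℕ)).mulVec w) i).rank = p)
    (L : Matrix (Fin n) (Fin n) ℂ) (hL0 : L.IsEigenvalue 0) :
    (∀ μ : ℂ,
        ((1 : Matrix (Fin n) (Fin n) ℂ) ⊗ₖ B - L ⊗ₖ Matrix.vecMulVec v w).IsEigenvalue μ →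
        ¬ B.IsEigenvalue μ →
        w ⬝ᵥ (B - μ • (1 : Matrix (Fin p) (Fin p) ℂ))⁻¹.mulVec v ≠ 0) ∧
      {lam : ℂ | L.IsEigenvalue lam} =
        {0} ∪ {x : ℂ | ∃ μ : ℂ,
          ((1 : Matrix (Fin n) (Fin n) ℂ) ⊗ₖ B - L ⊗ₖ Matrix.vecMulVec v w).IsEigenvalue μ ∧
          ¬ B.IsEigenvalue μ ∧
          x = 1 / (w ⬝ᵥ (B - μ • (1 : Matrix (Fin p) (Fin p) ℂ))⁻¹.mulVec v)} := by
  classical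
  set J := (1 : Matrix (Fin n) (Fin n) ℂ) ⊗ₖ B - L ⊗ₖ Matrix.vecMulVec v w with hJ
  have obs : ∀ (y : Fin p → ℂ) (μ' : ℂ), B.mulVec y = μ' • y → w ⬝ᵥ y = 0 → y = 0 :=
    fun y μ' h1 h2 => RankOneAux.obs_lemma B w hobsv y μ' h1 h2
  have ctrl : ∀ (ξ : Fin p → ℂ) (μ' : ℂ), Bᵀ.mulVec ξ = μ' • ξ → v ⬝ᵥ ξ = 0 → ξ = 0 := by
    intro ξ μ' h1 h2
    exact RankOneAux.obs_lemma Bᵀ v (by simpa using hctrb) ξ μ' h1 h2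
  -- the forward (necessity) part
  have key1 : ∀ μ : ℂ, J.IsEigenvalue μ → ¬ B.IsEigenvalue μ →
      (w ⬝ᵥ (B - μ • (1 : Matrix (Fin p) (Fin p) ℂ))⁻¹.mulVec v ≠ 0 ∧
        L.IsEigenvalue (1 / (w ⬝ᵥ (B - μ • (1 : Matrix (Fin p) (Fin p) ℂ))⁻¹.mulVec v))) := by
    rintro μ ⟨z, hz, hzJ⟩ hBμ
    have hunit : IsUnit (B - μ • (1 : Matrix (Fin p) (Fin p) ℂ)) := by
      rw [Matrix.isUnit_iff_isUnit_det, isUnit_iff_ne_zero]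
      exact fun h => hBμ ((RankOneAux.eig_iff_det B μ).mpr h)
    set c := w ⬝ᵥ (B - μ • (1 : Matrix (Fin p) (Fin p) ℂ))⁻¹.mulVec v with hc
    set a : Fin n → ℂ := fun i => w ⬝ᵥ fun k => z (i, k) with ha
    have hblock : ∀ i, (B - μ • (1 : Matrix (Fin p) (Fin p) ℂ)).mulVec (fun k => z (i, k))
        = (L.mulVec a i) • v := by
      intro i
      funext k
      have e1 : (J.mulVec z) (i, k)
          = (B.mulVec fun l => z (i, l)) k - (L.mulVec a i) * v k := by
        rw [hJ, Matrix.sub_mulVec]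
        simp only [Pi.sub_apply]
        rw [RankOneAux.kron_mulVec, RankOneAux.kron_mulVec]
        congr 1
        · exact RankOneAux.sum_one_mul _ i
        · simp only [RankOneAux.vecMulVec_mulVec', Pi.smul_apply, smul_eq_mul]
          rw [Matrix.mulVec, dotProduct, Finset.sum_mul]
          exact Finset.sum_congr rfl fun j _ => by simp only [ha]; ring
      have h2 : (B.mulVec fun l => z (i, l)) k - (L.mulVec a i) * v k = μ * z (i, k) := by
        rw [← e1, hzJ]; simp
      rw [Matrix.sub_mulVec, Matrix.smul_mulVec, Matrix.one_mulVec]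
      simp only [Pi.sub_apply, Pi.smul_apply, smul_eq_mul]
      linear_combination h2
    have hzi : ∀ i, (fun k => z (i, k))
        = (L.mulVec a i) • ((B - μ • (1 : Matrix (Fin p) (Fin p) ℂ))⁻¹.mulVec v) := by
      intro i
      rw [RankOneAux.inv_mulVec hunit (hblock i), Matrix.mulVec_smul]
    have haeq : ∀ i, a i = L.mulVec a i * c := by
      intro i
      have h0 : a i = w ⬝ᵥ fun k => z (i, k) := rfl
      rw [h0, hzi i, dotProduct_smul, smul_eq_mul, hc]
    have hane : a ≠ 0 := by
      intro h0
      apply hz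
      funext q
      have h1 := congrFun (hzi q.1) q.2
      simp only [h0, Matrix.mulVec_zero, Pi.zero_apply, zero_smul, Pi.smul_apply,
        smul_eq_mul, zero_mul] at h1
      simpa using h1
    have hcne : c ≠ 0 := by
      intro h0
      apply hane
      funext i
      rw [Pi.zero_apply, haeq i, h0, mul_zero]
    refine ⟨hcne, a, hane, ?_⟩
    funext i
    rw [Pi.smul_apply, smul_eq_mul, haeq i]
    field_simp
  -- the converse (sufficiency) part
  have key2 : ∀ lam : ℂ, lam ≠ 0 → L.IsEigenvalue lam →
      ∃ μ : ℂ, J.IsEigenvalue μ ∧ ¬ B.IsEigenvalue μ ∧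
        lam = 1 / (w ⬝ᵥ (B - μ • (1 : Matrix (Fin p) (Fin p) ℂ))⁻¹.mulVec v) := by
    rintro lam hlam ⟨u, hu, hLu⟩
    obtain ⟨μ, y, hy, hBy⟩ := RankOneAux.exists_eig hp (B - lam • Matrix.vecMulVec v w)
    rw [Matrix.sub_mulVec, Matrix.smul_mulVec, RankOneAux.vecMulVec_mulVec'] at hBy
    have hwy : w ⬝ᵥ y ≠ 0 := by
      intro h0
      apply hy
      apply obs y μ _ h0
      rw [h0, zero_smul, smul_zero, sub_zero] at hBy
      exact hBy
    have hBμ : ¬ B.IsEigenvalue μ := by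
      intro hB
      have hdet : (Bᵀ - μ • (1 : Matrix (Fin p) (Fin p) ℂ)).det = 0 := by
        have h1 := (RankOneAux.eig_iff_det B μ).mp hB
        rw [← Matrix.det_transpose, Matrix.transpose_sub, Matrix.transpose_smul,
          Matrix.transpose_one] at h1
        exact h1
      obtain ⟨ξ, hξ, hBξ⟩ := (RankOneAux.eig_iff_det Bᵀ μ).mpr hdet
      have h1 : ξ ⬝ᵥ (B.mulVec y - lam • ((w ⬝ᵥ y) • v)) = μ * (ξ ⬝ᵥ y) := by
        rw [hBy, dotProduct_smul, smul_eq_mul]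
      have h2 : ξ ⬝ᵥ B.mulVec y = μ * (ξ ⬝ᵥ y) := by
        rw [Matrix.dotProduct_mulVec, ← Matrix.mulVec_transpose, hBξ, smul_dotProduct,
          smul_eq_mul]
      have h3 : ξ ⬝ᵥ (B.mulVec y - lam • ((w ⬝ᵥ y) • v))
          = ξ ⬝ᵥ B.mulVec y - lam * ((w ⬝ᵥ y) * (ξ ⬝ᵥ v)) := by
        rw [dotProduct_sub, dotProduct_smul, dotProduct_smul]
        simp [smul_eq_mul]
      have h4 : lam * ((w ⬝ᵥ y) * (ξ ⬝ᵥ v)) = 0 := by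
        rw [h3, h2] at h1
        linear_combination -h1
      have hξv : ξ ⬝ᵥ v = 0 := by
        rcases mul_eq_zero.mp h4 with h | h
        · exact absurd h hlam
        · rcases mul_eq_zero.mp h with h' | h'
          · exact absurd h' hwy
          · exact h'
      exact hξ (ctrl ξ μ hBξ (by rwa [dotProduct_comm]))
    have hunit : IsUnit (B - μ • (1 : Matrix (Fin p) (Fin p) ℂ)) := by
      rw [Matrix.isUnit_iff_isUnit_det, isUnit_iff_ne_zero]
      exact fun h => hBμ ((RankOneAux.eig_iff_det B μ).mpr h)
    have hsolve : (B - μ • (1 : Matrix (Fin p) (Fin p) ℂ)).mulVec y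
        = (lam * (w ⬝ᵥ y)) • v := by
      funext k
      rw [Matrix.sub_mulVec, Matrix.smul_mulVec, Matrix.one_mulVec]
      have hk := congrFun hBy k
      simp only [Pi.sub_apply, Pi.smul_apply, smul_eq_mul] at hk ⊢
      linear_combination hk
    set c := w ⬝ᵥ (B - μ • (1 : Matrix (Fin p) (Fin p) ℂ))⁻¹.mulVec v with hc
    have hwyc : w ⬝ᵥ y = lam * (w ⬝ᵥ y) * c := by
      conv_lhs => rw [RankOneAux.inv_mulVec hunit hsolve]
      rw [Matrix.mulVec_smul, dotProduct_smul, smul_eq_mul, hc]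
    have hlc : lam * c = 1 := by
      have h5 : (w ⬝ᵥ y) * (lam * c - 1) = 0 := by linear_combination -hwyc
      rcases mul_eq_zero.mp h5 with h | h
      · exact absurd h hwy
      · linear_combination h
    have hc0 : c ≠ 0 := right_ne_zero_of_mul_eq_one hlc
    refine ⟨μ, ⟨fun q => u q.1 * y q.2, ?_, ?_⟩, hBμ, ?_⟩
    · obtain ⟨i, hi⟩ := Function.ne_iff.mp hu
      obtain ⟨k, hk⟩ := Function.ne_iff.mp hy
      intro h0
      have := congrFun h0 (i, k)
      simp only [Pi.zero_apply] at this
      rcases mul_eq_zero.mp this with h | h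
      · exact hi (by simpa using h)
      · exact hk (by simpa using h)
    · funext q
      obtain ⟨i, k⟩ := q
      have hfun : ∀ j : Fin n, (fun l => u j * y l) = u j • y := fun j => rfl
      rw [hJ, Matrix.sub_mulVec]
      simp only [Pi.sub_apply]
      rw [RankOneAux.kron_mulVec, RankOneAux.kron_mulVec]
      have e1 : ∑ j, (1 : Matrix (Fin n) (Fin n) ℂ) i j
            * (B.mulVec fun l => u j * y l) k = u i * B.mulVec y k := by
        rw [RankOneAux.sum_one_mul (fun j => (B.mulVec fun l => u j * y l) k) i]
        rw [hfun i, Matrix.mulVec_smul]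
        simp
      have e2 : ∑ j, L i j * ((Matrix.vecMulVec v w).mulVec fun l => u j * y l) k
          = lam * u i * ((w ⬝ᵥ y) * v k) := by
        have e2' : ∀ j, ((Matrix.vecMulVec v w).mulVec fun l => u j * y l) k
            = u j * ((w ⬝ᵥ y) * v k) := by
          intro j
          rw [hfun j, Matrix.mulVec_smul, RankOneAux.vecMulVec_mulVec']
          simp [mul_comm]
        simp only [e2']
        have hsum : ∑ j, L i j * (u j * ((w ⬝ᵥ y) * v k))
            = (∑ j, L i j * u j) * ((w ⬝ᵥ y) * v k) := by
          rw [Finset.sum_mul]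
          exact Finset.sum_congr rfl fun j _ => by ring
        have h6 : ∑ j, L i j * u j = lam * u i := by
          have h7 := congrFun hLu i
          simpa [Matrix.mulVec, dotProduct] using h7
        rw [hsum, h6]
      rw [e1, e2]
      have hk := congrFun hBy k
      simp only [Pi.sub_apply, Pi.smul_apply, smul_eq_mul] at hk ⊢
      linear_combination u i * hk
    · rw [eq_div_iff hc0]
      linear_combination hlc
  constructor
  · intro μ h1 h2
    exact (key1 μ h1 h2).1
  · ext lam
    simp only [Set.mem_setOf_eq, Set.mem_union, Set.mem_singleton_iff]
    constructor
    · intro h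
      by_cases hl : lam = 0
      · exact Or.inl hl
      · exact Or.inr (key2 lam hl h)
    · rintro (rfl | ⟨μ, hJμ, hBμ, rfl⟩)
      · exact hL0
      · exact (key1 μ hJμ hBμ).2
end

section
/- Let m ≥ 1, let c₁, …, c_m > 0 be real, let 𝔹 ∈ ℂ^{m×m}, and let λ ∈ ℂ. For s ∈ ℝ define the diagonal matrix E_λ(s) = diag(e^{λs/c₁}, …, e^{λs/c_m}). Let u : [0,1] → ℂ^{m}. Then the following are equivalent: (i) every component u_j is differentiable on [0,1] with c_j·u_j′(s) = λ·u_j(s) for all s ∈ [0,1] and j, and u(1) = 𝔹·u(0); (ii) there exists d ∈ ℂ^{m} with E_λ(−1)·𝔹·d = d and u(s) = E_λ(s)·d for all s ∈ [0,1]. In particular, a nonzero such u exists if and only if 1 is an eigenvalue of E_λ(−1)·𝔹, and then the eigenfunctions u are exactly the functions s ↦ E_λ(s)·d with d an eigenvector of E_λ(−1)·𝔹 for the eigenvalue 1. -/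
open Matrix Set

/-- The diagonal matrix `E_λ(s) = diag(e^{λs/c₁}, …, e^{λs/c_m})`. -/
noncomputable def Elam {m : ℕ} (c : Fin m → ℝ) (lam : ℂ) (s : ℝ) :
    Matrix (Fin m) (Fin m) ℂ :=
  Matrix.diagonal fun j => Complex.exp (lam * s / (c j))

/-- Condition (i): every component of `u` is differentiable on `[0,1]` with
`c_j·u_j′(s) = λ·u_j(s)`, and `u(1) = 𝔹·u(0)`. -/
def TransportEigCond {m : ℕ} (c : Fin m → ℝ) (𝔹 : Matrix (Fin m) (Fin m) ℂ) (lam : ℂ)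
    (u : ℝ → Fin m → ℂ) : Prop :=
  (∀ s ∈ Icc (0 : ℝ) 1, ∀ j : Fin m, ∃ d : ℂ,
      HasDerivWithinAt (fun t => u t j) d (Icc (0 : ℝ) 1) s ∧ (c j : ℂ) * d = lam * u s j) ∧
    u 1 = 𝔹.mulVec (u 0)

lemma Elam_mul {m : ℕ} (c : Fin m → ℝ) (lam : ℂ) (s t : ℝ) :
    Elam c lam s * Elam c lam t = Elam c lam (s + t) := by
  unfold Elam
  rw [Matrix.diagonal_mul_diagonal]
  have h : (fun j => Complex.exp (lam * s / c j) * Complex.exp (lam * t / c j))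
      = fun j => Complex.exp (lam * ↑(s + t) / c j) := by
    funext j
    rw [← Complex.exp_add]
    congr 1
    push_cast
    ring
  rw [h]

lemma Elam_zero {m : ℕ} (c : Fin m → ℝ) (lam : ℂ) : Elam c lam 0 = (1 : Matrix (Fin m) (Fin m) ℂ) := by
  simp [Elam]

/-- Scalar ODE uniqueness on `[0,1]`. -/
lemma ode_unique (k : ℂ) (f : ℝ → ℂ)
    (hf : ∀ s ∈ Icc (0 : ℝ) 1, HasDerivWithinAt f (k * f s) (Icc (0 : ℝ) 1) s) :
    ∀ s ∈ Icc (0 : ℝ) 1, f s = Complex.exp (k * s) * f 0 := by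
  set g : ℝ → ℂ := fun s => Complex.exp (-k * s) * f s with hg
  have hgd : ∀ s ∈ Icc (0 : ℝ) 1, HasDerivWithinAt g 0 (Icc (0 : ℝ) 1) s := by
    intro s hs
    have h1 : HasDerivAt (fun t : ℝ => Complex.exp (-k * t))
        (Complex.exp (-k * s) * (-k * 1)) s :=
      ((Complex.ofRealCLM.hasDerivAt (x := s)).const_mul (-k)).cexp
    have h2 := (h1.hasDerivWithinAt (s := Icc (0:ℝ) 1)).mul (hf s hs)
    convert h2 using 1
    · rfl
    · rfl
    ring
  have hcont : ContinuousOn g (Icc (0 : ℝ) 1) := fun s hs =>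
    (hgd s hs).continuousWithinAt
  have hconst : ∀ s ∈ Icc (0 : ℝ) 1, g s = g 0 := by
    apply constant_of_has_deriv_right_zero hcont
    intro x hx
    refine (hgd x ⟨hx.1, hx.2.le⟩).mono_of_mem_nhdsWithin ?_
    refine mem_nhdsWithin.2 ⟨Iio 1, isOpen_Iio, hx.2, ?_⟩
    rintro y ⟨hy1, hy2⟩
    exact ⟨le_trans hx.1 hy2, le_of_lt hy1⟩
  intro s hs
  have h0 : g 0 = f 0 := by simp [hg]
  have hgs : Complex.exp (-k * s) * f s = f 0 := by
    have := hconst s hs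
    rw [h0] at this
    simpa [hg] using this
  have h3 : Complex.exp (k * s) * (Complex.exp (-k * s) * f s)
      = Complex.exp (k * s) * f 0 := by rw [hgs]
  rwa [← mul_assoc, ← Complex.exp_add, show k * s + -k * s = 0 by ring, Complex.exp_zero,
    one_mul] at h3

/-- Eigenfunction characterisation for the transport operator on a metric graph:
`u` solves `c_j u_j′ = λ u_j` on `[0,1]` with `u(1) = 𝔹 u(0)` iff `u(s) = E_λ(s)d` for some
fixed vector `d` with `E_λ(−1)𝔹d = d`; a nonzero such `u` exists iff `1` is an eigenvalue of
`E_λ(−1)𝔹`, and then the eigenfunctions are exactly `s ↦ E_λ(s)d` with `d` an eigenvector of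
`E_λ(−1)𝔹` for the eigenvalue `1`. -/
theorem transport_operator_eigenfunctions (m : ℕ) (hm : 1 ≤ m)
    (c : Fin m → ℝ) (hc : ∀ j, 0 < c j)
    (𝔹 : Matrix (Fin m) (Fin m) ℂ) (lam : ℂ) (u : ℝ → Fin m → ℂ) :
    (TransportEigCond c 𝔹 lam u ↔
        ∃ d : Fin m → ℂ, (Elam c lam (-1) * 𝔹).mulVec d = d ∧
          ∀ s ∈ Icc (0 : ℝ) 1, u s = (Elam c lam s).mulVec d) ∧
      ((∃ u₂ : ℝ → Fin m → ℂ, TransportEigCond c 𝔹 lam u₂ ∧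
          ∃ s ∈ Icc (0 : ℝ) 1, u₂ s ≠ 0) ↔
        ∃ d : Fin m → ℂ, d ≠ 0 ∧ (Elam c lam (-1) * 𝔹).mulVec d = d) ∧
      ((TransportEigCond c 𝔹 lam u ∧ ∃ s ∈ Icc (0 : ℝ) 1, u s ≠ 0) ↔
        ∃ d : Fin m → ℂ, d ≠ 0 ∧ (Elam c lam (-1) * 𝔹).mulVec d = d ∧
          ∀ s ∈ Icc (0 : ℝ) 1, u s = (Elam c lam s).mulVec d) := by
  have hcne : ∀ j, (c j : ℂ) ≠ 0 := fun j => Complex.ofReal_ne_zero.2 (hc j).ne'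
  have h0mem : (0 : ℝ) ∈ Icc (0 : ℝ) 1 := ⟨le_refl _, zero_le_one⟩
  have h1mem : (1 : ℝ) ∈ Icc (0 : ℝ) 1 := ⟨zero_le_one, le_refl _⟩
  -- main equivalence, for an arbitrary function
  have main : ∀ v : ℝ → Fin m → ℂ, TransportEigCond c 𝔹 lam v ↔
      ∃ d : Fin m → ℂ, (Elam c lam (-1) * 𝔹).mulVec d = d ∧
        ∀ s ∈ Icc (0 : ℝ) 1, v s = (Elam c lam s).mulVec d := by
    intro v
    constructor
    · rintro ⟨hder, hbc⟩
      have hsol : ∀ s ∈ Icc (0 : ℝ) 1, ∀ j, v s j = Complex.exp (lam * s / c j) * v 0 j := by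
        intro s hs j
        have key : ∀ t ∈ Icc (0 : ℝ) 1,
            HasDerivWithinAt (fun t => v t j) (lam / c j * v t j) (Icc (0 : ℝ) 1) t := by
          intro t ht
          obtain ⟨dv, hdv, heq⟩ := hder t ht j
          have hdveq : dv = lam / c j * v t j := by
            rw [div_mul_eq_mul_div, eq_div_iff (hcne j), mul_comm]
            exact heq
          exact hdveq ▸ hdv
        have := ode_unique (lam / c j) (fun t => v t j) key s hs
        rwa [div_mul_eq_mul_div] at this
      have hform : ∀ s ∈ Icc (0 : ℝ) 1, v s = (Elam c lam s).mulVec (v 0) := by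
        intro s hs
        funext j
        rw [Elam, Matrix.mulVec_diagonal]
        exact hsol s hs j
      refine ⟨v 0, ?_, hform⟩
      have h1 : v 1 = (Elam c lam 1).mulVec (v 0) := hform 1 h1mem
      calc (Elam c lam (-1) * 𝔹).mulVec (v 0)
          = (Elam c lam (-1)).mulVec (𝔹.mulVec (v 0)) := (Matrix.mulVec_mulVec _ _ _).symm
        _ = (Elam c lam (-1)).mulVec ((Elam c lam 1).mulVec (v 0)) := by rw [← hbc, h1]
        _ = (Elam c lam (-1) * Elam c lam 1).mulVec (v 0) := Matrix.mulVec_mulVec _ _ _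
        _ = v 0 := by
            rw [Elam_mul, show (-1 : ℝ) + 1 = 0 by ring, Elam_zero, Matrix.one_mulVec]
    · rintro ⟨d, hfix, hform⟩
      have hcomp : ∀ t ∈ Icc (0 : ℝ) 1, ∀ j, v t j = Complex.exp (lam / c j * t) * d j := by
        intro t ht j
        rw [hform t ht, Elam, Matrix.mulVec_diagonal, div_mul_eq_mul_div]
      constructor
      · intro s hs j
        refine ⟨lam / c j * v s j, ?_, ?_⟩
        · have hD : HasDerivAt (fun t : ℝ => Complex.exp (lam / c j * t) * d j)
              (Complex.exp (lam / c j * s) * (lam / c j * 1) * d j) s :=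
            ((Complex.ofRealCLM.hasDerivAt (x := s)).const_mul (lam / c j)).cexp.mul_const (d j)
          have hW := hD.hasDerivWithinAt (s := Icc (0:ℝ) 1)
          have := hW.congr (fun t ht => hcomp t ht j) (hcomp s hs j)
          convert this using 1
          · rfl
          rw [hcomp s hs j]
          ring
        · rw [← mul_assoc, mul_div_cancel₀ lam (hcne j)]
      · have hv0 : v 0 = d := by
          rw [hform 0 h0mem, Elam_zero, Matrix.one_mulVec]
        have hE1 : (Elam c lam 1).mulVec d = 𝔹.mulVec d := by
          conv_lhs => rw [← hfix]
          rw [Matrix.mulVec_mulVec, ← mul_assoc, Elam_mul,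
            show (1 : ℝ) + -1 = 0 by ring, Elam_zero, one_mul]
        rw [hform 1 h1mem, hv0, hE1]
  -- nonvanishing transfer
  have nz : ∀ (w : ℝ → Fin m → ℂ) (d : Fin m → ℂ),
      (∀ s ∈ Icc (0 : ℝ) 1, w s = (Elam c lam s).mulVec d) →
      ((∃ s ∈ Icc (0 : ℝ) 1, w s ≠ 0) ↔ d ≠ 0) := by
    intro w d hform
    constructor
    · rintro ⟨s, hs, hws⟩ hd0
      apply hws
      rw [hform s hs, hd0, Matrix.mulVec_zero]
    · intro hd
      refine ⟨0, h0mem, ?_⟩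
      rw [hform 0 h0mem, Elam_zero, Matrix.one_mulVec]
      exact hd
  refine ⟨main u, ?_, ?_⟩
  · constructor
    · rintro ⟨u₂, hcond, hnz⟩
      obtain ⟨d, hfix, hform⟩ := (main u₂).1 hcond
      exact ⟨d, (nz u₂ d hform).1 hnz, hfix⟩
    · rintro ⟨d, hd, hfix⟩
      refine ⟨fun s => (Elam c lam s).mulVec d, (main _).2 ⟨d, hfix, fun s _ => rfl⟩, ?_⟩
      exact (nz _ d (fun s _ => rfl)).2 hd
  · constructor
    · rintro ⟨hcond, hnz⟩
      obtain ⟨d, hfix, hform⟩ := (main u).1 hcond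
      exact ⟨d, (nz u d hform).1 hnz, hfix, hform⟩
    · rintro ⟨d, hd, hfix, hform⟩
      exact ⟨(main u).2 ⟨d, hfix, hform⟩, (nz u d hform).2 hd⟩
end

section
/- Let G be a finite simple graph on vertex set V in which every vertex has positive degree, let X : V → ℂ, and let λ > 0 be a real number with sin(√λ) ≠ 0. For each ordered pair of adjacent vertices (v, w) define u_{vw} : [0,1] → ℂ by u_{vw}(s) = (X(v)·sin(√λ·(1−s)) + X(w)·sin(√λ·s)) / sin(√λ). Then: (a) each u_{vw} satisfies −u_{vw}″(s) = λ·u_{vw}(s) on [0,1] with u_{vw}(0) = X(v) and u_{vw}(1) = X(w); and (b) the Kirchhoff conditions Σ_{w ∈ N(v)} u_{vw}′(0) = 0 hold for every vertex v ∈ V if and only if Σ_{w ∈ N(v)} X(w) = cos(√λ)·deg(v)·X(v) for every v ∈ V, i.e., if and only if X satisfies the transition-matrix eigenvalue equation 𝒟^{−1}𝒜 X = cos(√λ)·X, where 𝒜 is the adjacency matrix and 𝒟 the degree matrix of G. -/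
open Matrix Set

/-- The edge function `u_{vw}(s) = (X(v)·sin(√λ(1−s)) + X(w)·sin(√λ s)) / sin(√λ)`. -/
noncomputable def edgeFun {V : Type*} (X : V → ℂ) (lam : ℝ) (v w : V) (s : ℝ) : ℂ :=
  (X v * (Real.sin (Real.sqrt lam * (1 - s)) : ℂ) +
      X w * (Real.sin (Real.sqrt lam * s) : ℂ)) / (Real.sin (Real.sqrt lam) : ℂ)

private lemma inner1 (a : ℝ) (s : ℝ) :
    HasDerivAt (fun t : ℝ => a * (1 - t)) (-a) s := by
  simpa using ((hasDerivAt_id s).const_sub 1).const_mul a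

private lemma inner2 (a : ℝ) (s : ℝ) :
    HasDerivAt (fun t : ℝ => a * t) a s := by
  simpa using (hasDerivAt_id s).const_mul a

private lemma aux1 (A B c : ℂ) (a : ℝ) (s : ℝ) :
    HasDerivAt (fun t : ℝ =>
        (A * (Real.sin (a * (1 - t)) : ℂ) + B * (Real.sin (a * t) : ℂ)) / c)
      ((A * (-(a * Real.cos (a * (1 - s))) : ℝ) + B * ((a * Real.cos (a * s)) : ℝ)) / c) s := by
  have h1 : HasDerivAt (fun t : ℝ => Real.sin (a * (1 - t)))
      (-(a * Real.cos (a * (1 - s)))) s := by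
    simpa [mul_comm, mul_left_comm, mul_assoc] using (inner1 a s).sin
  have h2 : HasDerivAt (fun t : ℝ => Real.sin (a * t)) (a * Real.cos (a * s)) s := by
    simpa [mul_comm] using (inner2 a s).sin
  exact ((h1.ofReal_comp.const_mul A).add (h2.ofReal_comp.const_mul B)).div_const c

private lemma aux2 (A B c : ℂ) (a : ℝ) (s : ℝ) :
    HasDerivAt (fun t : ℝ =>
        (A * ((-(a * Real.cos (a * (1 - t)))) : ℝ) + B * ((a * Real.cos (a * t)) : ℝ)) / c)
      ((A * ((-(a ^ 2 * Real.sin (a * (1 - s)))) : ℝ) +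
          B * ((-(a ^ 2 * Real.sin (a * s))) : ℝ)) / c) s := by
  have h1 : HasDerivAt (fun t : ℝ => -(a * Real.cos (a * (1 - t))))
      (-(a ^ 2 * Real.sin (a * (1 - s)))) s := by
    have := ((inner1 a s).cos.const_mul a).neg
    simpa [mul_comm, mul_left_comm, mul_assoc, pow_two, Pi.neg_def] using this
  have h2 : HasDerivAt (fun t : ℝ => a * Real.cos (a * t))
      (-(a ^ 2 * Real.sin (a * s))) s := by
    have := (inner2 a s).cos.const_mul a
    simpa [mul_comm, mul_left_comm, mul_assoc, pow_two] using this
  exact ((h1.ofReal_comp.const_mul A).add (h2.ofReal_comp.const_mul B)).div_const c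

/-- On an equilateral metric graph, the functions `u_{vw}` solve `−u″ = λu` on `[0,1]`
with boundary values `X(v)`, `X(w)`, and the Kirchhoff conditions at every vertex hold iff
the vertex values `X` satisfy the transition-matrix eigenvalue equation
`𝒟⁻¹𝒜 X = cos(√λ)·X`. -/
theorem metric_graph_laplacian_eigenfunction {V : Type*} [Fintype V] [DecidableEq V]
    (G : SimpleGraph V) [DecidableRel G.Adj] (hdeg : ∀ v : V, 0 < G.degree v)
    (X : V → ℂ) (lam : ℝ) (hlam : 0 < lam) (hsin : Real.sin (Real.sqrt lam) ≠ 0) :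
    (∀ v w : V, G.Adj v w →
        (∀ s ∈ Icc (0 : ℝ) 1,
          -(deriv (deriv (edgeFun X lam v w)) s) = (lam : ℂ) * edgeFun X lam v w s) ∧
        edgeFun X lam v w 0 = X v ∧ edgeFun X lam v w 1 = X w) ∧
      ((∀ v : V, ∑ w ∈ G.neighborFinset v, deriv (edgeFun X lam v w) 0 = 0) ↔
        ∀ v : V, ∑ w ∈ G.neighborFinset v, X w =
          (Real.cos (Real.sqrt lam) : ℂ) * (G.degree v : ℂ) * X v) ∧
      ((∀ v : V, ∑ w ∈ G.neighborFinset v, deriv (edgeFun X lam v w) 0 = 0) ↔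
        ((Matrix.diagonal fun v : V => (G.degree v : ℂ))⁻¹ * G.adjMatrix ℂ).mulVec X =
          (Real.cos (Real.sqrt lam) : ℂ) • X) := by
  set a : ℝ := Real.sqrt lam with ha
  have ha0 : a ≠ 0 := ne_of_gt (Real.sqrt_pos.2 hlam)
  have hc : (Real.sin a : ℂ) ≠ 0 := by exact_mod_cast hsin
  have hderiv : ∀ v w : V,
      deriv (edgeFun X lam v w) = fun s =>
        (X v * ((-(a * Real.cos (a * (1 - s)))) : ℝ) +
          X w * ((a * Real.cos (a * s)) : ℝ)) / (Real.sin a : ℂ) := by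
    intro v w
    funext s
    exact (aux1 (X v) (X w) _ a s).deriv
  have hderiv0 : ∀ v w : V, deriv (edgeFun X lam v w) 0 =
      ((a : ℂ) / (Real.sin a : ℂ)) * (X w - (Real.cos a : ℂ) * X v) := by
    intro v w
    rw [hderiv]
    push_cast
    field_simp
    ring_nf
    simp only [Complex.cos_zero, mul_one]
  have hkir : ∀ v : V, (∑ w ∈ G.neighborFinset v, deriv (edgeFun X lam v w) 0 = 0) ↔
      ∑ w ∈ G.neighborFinset v, X w = (Real.cos a : ℂ) * (G.degree v : ℂ) * X v := by
    intro v
    have hsum : ∑ w ∈ G.neighborFinset v, deriv (edgeFun X lam v w) 0 =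
        ((a : ℂ) / (Real.sin a : ℂ)) *
          ((∑ w ∈ G.neighborFinset v, X w) -
            (Real.cos a : ℂ) * (G.degree v : ℂ) * X v) := by
      simp only [hderiv0]
      rw [← Finset.mul_sum]
      congr 1
      rw [Finset.sum_sub_distrib, Finset.sum_const, SimpleGraph.card_neighborFinset_eq_degree]
      simp [mul_comm, mul_left_comm, mul_assoc]
    rw [hsum]
    have hne : ((a : ℂ) / (Real.sin a : ℂ)) ≠ 0 :=
      div_ne_zero (by exact_mod_cast ha0) hc
    rw [mul_eq_zero]
    constructor
    · rintro (h | h)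
      · exact absurd h hne
      · exact sub_eq_zero.mp h
    · intro h
      right
      rw [sub_eq_zero]
      exact h
  refine ⟨?_, ?_, ?_⟩
  · intro v w _
    refine ⟨?_, ?_, ?_⟩
    · intro s _
      rw [hderiv v w]
      have h2 := (aux2 (X v) (X w) ((Real.sin a : ℂ)) a s).deriv
      rw [h2]
      have hA : (a : ℝ) ^ 2 = lam := Real.sq_sqrt hlam.le
      rw [edgeFun]
      rw [← ha]
      push_cast [hA]
      field_simp
      ring
    · have hc' : Complex.sin (a : ℂ) ≠ 0 := by rwa [← Complex.ofReal_sin]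
      simp [edgeFun]
      rw [mul_div_assoc, div_self hc', mul_one]
    · have hc' : Complex.sin (a : ℂ) ≠ 0 := by rwa [← Complex.ofReal_sin]
      simp [edgeFun]
      rw [mul_div_assoc, div_self hc', mul_one]
  · exact forall_congr' hkir
  · rw [forall_congr' hkir]
    have hD : (Matrix.diagonal fun v : V => (G.degree v : ℂ))⁻¹ =
        Matrix.diagonal fun v : V => ((G.degree v : ℂ))⁻¹ := by
      apply Matrix.inv_eq_right_inv
      rw [Matrix.diagonal_mul_diagonal, ← Matrix.diagonal_one]
      have h1 : (fun v : V => (G.degree v : ℂ) * ((G.degree v : ℂ))⁻¹) = fun _ => (1 : ℂ) := by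
        funext v
        exact mul_inv_cancel₀ (by exact_mod_cast (hdeg v).ne' : ((G.degree v : ℂ)) ≠ 0)
      rw [h1]
    rw [hD, funext_iff]
    apply forall_congr'
    intro v
    have hdv : ((G.degree v : ℂ)) ≠ 0 := by exact_mod_cast (hdeg v).ne'
    rw [← Matrix.mulVec_mulVec]
    simp only [Matrix.mulVec_diagonal, SimpleGraph.adjMatrix_mulVec_apply, Pi.smul_apply,
      smul_eq_mul]
    rw [inv_mul_eq_iff_eq_mul₀ hdv]
    constructor
    · intro h; rw [h]; ring
    · intro h; rw [h]; ring
end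

section
/- Let n ≥ 1, let a ∈ ℝ^{n×n} be symmetric with nonnegative entries and total weight m₂ := Σ_{i,j} a_{ij} > 0, and set Wᵢ := Σ_{j} a_{ij}. Let ∼ be an equivalence relation on {1, …, n} (a partition into communities) and let δ(i,j) = 1 if i ∼ j and δ(i,j) = 0 otherwise. Then the modularity Q := (1/m₂) Σ_{i,j} ( a_{ij} − WᵢWⱼ/m₂ ) δ(i,j) satisfies −1 ≤ Q ≤ 1. -/
open Matrix

/-- Modularity of a partition of a weighted undirected network lies in `[−1, 1]`. -/
theorem modularity_bounds (n : ℕ) (hn : 1 ≤ n)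
    (a : Matrix (Fin n) (Fin n) ℝ)
    (hsymm : ∀ i j, a i j = a j i)
    (hpos : ∀ i j, 0 ≤ a i j)
    (hm : 0 < ∑ i, ∑ j, a i j)
    (r : Fin n → Fin n → Prop) [DecidableRel r] (hr : Equivalence r) :
    -1 ≤ (1 / (∑ i, ∑ j, a i j)) *
        ∑ i, ∑ j, (a i j - (∑ k, a i k) * (∑ k, a j k) / (∑ i', ∑ j', a i' j')) *
          (if r i j then (1 : ℝ) else 0) ∧
      (1 / (∑ i, ∑ j, a i j)) *
        ∑ i, ∑ j, (a i j - (∑ k, a i k) * (∑ k, a j k) / (∑ i', ∑ j', a i' j')) *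
          (if r i j then (1 : ℝ) else 0) ≤ 1 := by
  set m := ∑ i, ∑ j, a i j with hmdef
  set w : Fin n → ℝ := fun i => ∑ k, a i k with hw
  set δ : Fin n → Fin n → ℝ := fun i j => if r i j then (1 : ℝ) else 0 with hδ
  have hδ01 : ∀ i j, 0 ≤ δ i j ∧ δ i j ≤ 1 := by
    intro i j; simp only [hδ]; split <;> norm_num
  have hwpos : ∀ i, 0 ≤ w i := fun i => Finset.sum_nonneg fun k _ => hpos i k
  have hwsum : ∑ i, w i = m := rfl
  set A := ∑ i, ∑ j, a i j * δ i j with hA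
  set B := ∑ i, ∑ j, w i * w j * δ i j with hB
  have hA0 : 0 ≤ A := Finset.sum_nonneg fun i _ => Finset.sum_nonneg fun j _ =>
    mul_nonneg (hpos i j) (hδ01 i j).1
  have hA1 : A ≤ m := by
    apply Finset.sum_le_sum; intro i _
    apply Finset.sum_le_sum; intro j _
    calc a i j * δ i j ≤ a i j * 1 := by
          exact mul_le_mul_of_nonneg_left (hδ01 i j).2 (hpos i j)
      _ = a i j := mul_one _
  have hB0 : 0 ≤ B := Finset.sum_nonneg fun i _ => Finset.sum_nonneg fun j _ =>
    mul_nonneg (mul_nonneg (hwpos i) (hwpos j)) (hδ01 i j).1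
  have hB1 : B ≤ m * m := by
    have h1 : B ≤ ∑ i, ∑ j, w i * w j := by
      apply Finset.sum_le_sum; intro i _
      apply Finset.sum_le_sum; intro j _
      calc w i * w j * δ i j ≤ w i * w j * 1 :=
            mul_le_mul_of_nonneg_left (hδ01 i j).2 (mul_nonneg (hwpos i) (hwpos j))
        _ = w i * w j := mul_one _
    have h2 : ∑ i, ∑ j, w i * w j = m * m := by
      rw [← hwsum]
      rw [← Finset.sum_mul_sum]
    linarith
  have hQ : (∑ i, ∑ j, (a i j - w i * w j / m) * δ i j) = A - B / m := by
    have h : ∀ i j : Fin n, (a i j - w i * w j / m) * δ i j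
        = a i j * δ i j - w i * w j * δ i j / m := by intro i j; ring
    simp only [h, Finset.sum_sub_distrib, Finset.sum_div, hA, hB]
  have hBm : B / m ≤ m := by rw [div_le_iff₀ hm]; nlinarith
  have hBm0 : 0 ≤ B / m := div_nonneg hB0 hm.le
  show -1 ≤ 1 / m * (∑ i, ∑ j, (a i j - w i * w j / m) * δ i j) ∧
    1 / m * (∑ i, ∑ j, (a i j - w i * w j / m) * δ i j) ≤ 1
  rw [hQ, one_div_mul_eq_div]
  constructor
  · rw [le_div_iff₀ hm]; linarith
  · rw [div_le_one hm]; linarith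
end
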